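/- Fix n ≥ 1 and let H_n⁺ = { x ∈ ℂⁿ : x₁ x₂ ⋯ xₙ = 1 }. The system of polynomial equations x_i(x_i - 0) = x_n(x_n - 0) for i = 1,…,n-1 together with x₁⋯xₙ = 1 (i.e. x₁² = x₂² = ⋯ = xₙ² and x₁⋯xₙ = 1) has exactly n·2^{n-1} solutions in ℂⁿ. -/

import Mathlib

open Polynomial

/-- For `n ≥ 1`, the ED critical point system for the data point `y = 0` on the hypersurface
`x₁ ⋯ xₙ = 1`, namely `x₁² = x₂² = ⋯ = xₙ²` together with `x₁ ⋯ xₙ = 1`, has exactly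
`n · 2^{n-1}` solutions in `ℂⁿ`. -/
theorem stmt13 {n : ℕ} (hn : 1 ≤ n) :
    Set.ncard {x : Fin n → ℂ | (∀ i j : Fin n, x i ^ 2 = x j ^ 2) ∧ ∏ i, x i = 1} =
      n * 2 ^ (n - 1) := by
  classical
  have hn0 : 0 < n := hn
  set S : Set (Fin n → ℂ) :=
    {x : Fin n → ℂ | (∀ i j : Fin n, x i ^ 2 = x j ^ 2) ∧ ∏ i, x i = 1} with hS
  set i0 : Fin n := ⟨0, hn0⟩ with hi0
  obtain ⟨w, hw⟩ : ∃ w : ℂ, w ^ n = -1 := IsAlgClosed.exists_pow_nat_eq (-1) hn0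
  have hwne : w ≠ 0 := by
    intro h; rw [h, zero_pow hn0.ne'] at hw
    exact (by norm_num : (0:ℂ) ≠ -1) hw
  -- sign function
  set μ : Bool → ℂ := fun b => if b then 1 else -1 with hμ
  have hμsq : ∀ b, μ b ^ 2 = 1 := by rintro (_|_) <;> simp [hμ]
  -- the full sign vector
  set E : ({i : Fin n // i ≠ i0} → Bool) → Fin n → ℂ :=
    fun ε i => if h : i = i0 then 1 else μ (ε ⟨i, h⟩) with hE
  have hEsq : ∀ ε i, E ε i ^ 2 = 1 := by
    intro ε i; by_cases h : i = i0 <;> simp [hE, h, hμsq]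
  have hPsq : ∀ ε, (∏ i, E ε i) ^ 2 = 1 := by
    intro ε
    rw [← Finset.prod_pow]
    exact Finset.prod_eq_one fun i _ => hEsq ε i
  have hPcases : ∀ ε, (∏ i, E ε i) = 1 ∨ (∏ i, E ε i) = -1 := by
    intro ε
    have h1 := hPsq ε
    have h2 : ((∏ i, E ε i) - 1) * ((∏ i, E ε i) + 1) = 0 := by linear_combination h1
    rcases mul_eq_zero.1 h2 with h | h
    · left; linear_combination h
    · right; linear_combination h
  -- the scaling factor
  set c : ({i : Fin n // i ≠ i0} → Bool) → ℂ :=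
    fun ε => if (∏ i, E ε i) = 1 then 1 else w with hc
  have hcne : ∀ ε, c ε ≠ 0 := by
    intro ε; by_cases h : (∏ i, E ε i) = 1 <;> simp [hc, h, hwne]
  have hcprod : ∀ ε, (∏ i, E ε i) * (c ε) ^ n = 1 := by
    intro ε
    rcases hPcases ε with h | h
    · simp [hc, h]
    · have hne : (∏ i, E ε i) ≠ 1 := by rw [h]; norm_num
      simp [hc, hne, h, hw]
  -- the forward map
  set f : ({i : Fin n // i ≠ i0} → Bool) × {u : ℂ // u ^ n = 1} → (Fin n → ℂ) :=
    fun p i => E p.1 i * (c p.1 * (p.2 : ℂ)) with hf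
  have hfmem : ∀ p, f p ∈ S := by
    rintro ⟨ε, u, hu⟩
    constructor
    · intro i j
      show (E ε i * (c ε * u)) ^ 2 = (E ε j * (c ε * u)) ^ 2
      simp only [mul_pow, hEsq, one_mul]
    · show (∏ i, E ε i * (c ε * u)) = 1
      rw [Finset.prod_mul_distrib, Finset.prod_const, Finset.card_univ,
        Fintype.card_fin, mul_pow, hu, mul_one]
      exact hcprod ε
  -- properties of members of S
  have hSt : ∀ x ∈ S, ∀ i, x i ^ 2 = (x i0) ^ 2 := fun x hx i => hx.1 i i0
  have hStn : ∀ x ∈ S, ((x i0) ^ n) ^ 2 = 1 := by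
    intro x hx
    have h1 : ((x i0) ^ 2) ^ n = 1 := by
      calc ((x i0) ^ 2) ^ n = ∏ _i : Fin n, (x i0) ^ 2 := by
            rw [Finset.prod_const, Finset.card_univ, Fintype.card_fin]
      _ = ∏ i : Fin n, (x i) ^ 2 := Finset.prod_congr rfl fun i _ => (hSt x hx i).symm
      _ = (∏ i : Fin n, x i) ^ 2 := by rw [Finset.prod_pow]
      _ = 1 := by rw [hx.2, one_pow]
    calc ((x i0) ^ n) ^ 2 = ((x i0) ^ 2) ^ n := by ring
    _ = 1 := h1
  have hSt0 : ∀ x ∈ S, x i0 ≠ 0 := by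
    intro x hx h
    have := hStn x hx
    rw [h, zero_pow hn0.ne', zero_pow two_ne_zero] at this
    exact zero_ne_one this
  have hSpm : ∀ x ∈ S, ∀ i, x i = x i0 ∨ x i = -(x i0) := by
    intro x hx i
    have h1 := hSt x hx i
    have h2 : (x i - x i0) * (x i + x i0) = 0 := by linear_combination h1
    rcases mul_eq_zero.1 h2 with h | h
    · left; linear_combination h
    · right; linear_combination h
  -- the inverse map
  set cx : (Fin n → ℂ) → ℂ := fun x => if (x i0) ^ n = 1 then 1 else w with hcx
  have hcxne : ∀ x, cx x ≠ 0 := by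
    intro x; by_cases h : (x i0) ^ n = 1 <;> simp [hcx, h, hwne]
  set g : (Fin n → ℂ) → ({i : Fin n // i ≠ i0} → Bool) × ℂ :=
    fun x => (fun i => if x i.1 = x i0 then true else false, x i0 / cx x) with hg
  -- key: for x ∈ S, E (g x).1 i * x i0 = x i
  have hgkey : ∀ x ∈ S, ∀ i, E (g x).1 i * x i0 = x i := by
    intro x hx i
    by_cases h : i = i0
    · subst h; simp [hE]
    · rcases hSpm x hx i with h1 | h1
      · simp [hE, h, hg, h1, hμ]
      · have hne : -(x i0) ≠ x i0 := by
          intro h2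
          exact hSt0 x hx (by linear_combination -h2 / 2)
        simp [hE, h, hg, h1, hμ, hne]
  have hgprod : ∀ x ∈ S, (∏ i, E (g x).1 i) * (x i0) ^ n = 1 := by
    intro x hx
    calc (∏ i, E (g x).1 i) * (x i0) ^ n = ∏ i, (E (g x).1 i * x i0) := by
          rw [Finset.prod_mul_distrib, Finset.prod_const, Finset.card_univ, Fintype.card_fin]
    _ = ∏ i, x i := Finset.prod_congr rfl fun i _ => hgkey x hx i
    _ = 1 := hx.2
  -- for x ∈ S, the two candidate scalings agree
  have hccx : ∀ x ∈ S, c (g x).1 = cx x := by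
    intro x hx
    have hxn2 := hStn x hx
    have hprod := hgprod x hx
    by_cases h : (x i0) ^ n = 1
    · have hP : (∏ i, E (g x).1 i) = 1 := by
        have := hprod; rw [h, mul_one] at this; exact this
      have e1 : c (g x).1 = 1 := by simp only [hc]; exact if_pos hP
      have e2 : cx x = 1 := by simp only [hcx]; exact if_pos h
      rw [e1, e2]
    · have hxn : (x i0) ^ n = -1 := by
        have h2 : ((x i0) ^ n - 1) * ((x i0) ^ n + 1) = 0 := by linear_combination hxn2
        rcases mul_eq_zero.1 h2 with h3 | h3
        · exact absurd (by linear_combination h3) h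
        · linear_combination h3
      have hP : (∏ i, E (g x).1 i) = -1 := by
        have := hprod; rw [hxn] at this; linear_combination -this
      have hPne : (∏ i, E (g x).1 i) ≠ 1 := by rw [hP]; norm_num
      have e1 : c (g x).1 = w := by simp only [hc]; exact if_neg hPne
      have e2 : cx x = w := by simp only [hcx]; exact if_neg h
      rw [e1, e2]
  -- g maps S into the domain
  have hgmem : ∀ x ∈ S, ((g x).2) ^ n = 1 := by
    intro x hx
    have hxn2 := hStn x hx
    show (x i0 / cx x) ^ n = 1
    rw [div_pow]
    by_cases h : (x i0) ^ n = 1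
    · simp [hcx, h]
    · have hxn : (x i0) ^ n = -1 := by
        have h2 : ((x i0) ^ n - 1) * ((x i0) ^ n + 1) = 0 := by linear_combination hxn2
        rcases mul_eq_zero.1 h2 with h3 | h3
        · exact absurd (by linear_combination h3) h
        · linear_combination h3
      rw [hcx]; simp only [h, if_false]
      rw [hxn, hw]; norm_num
  -- package as maps between subtypes
  set F : ({i : Fin n // i ≠ i0} → Bool) × {u : ℂ // u ^ n = 1} → S :=
    fun p => ⟨f p, hfmem p⟩ with hF
  set G : S → ({i : Fin n // i ≠ i0} → Bool) × {u : ℂ // u ^ n = 1} :=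
    fun x => ((g x.1).1, ⟨(g x.1).2, hgmem x.1 x.2⟩) with hG
  have hFG : ∀ x, F (G x) = x := by
    rintro ⟨x, hx⟩
    have ht0 := hSt0 x hx
    have hcc := hccx x hx
    apply Subtype.ext
    funext i
    show E (g x).1 i * (c (g x).1 * (x i0 / cx x)) = x i
    rw [hcc, mul_div_cancel₀ _ (hcxne x)]
    exact hgkey x hx i
  have hGF : ∀ p, G (F p) = p := by
    rintro ⟨ε, u, hu⟩
    have hu0 : (u : ℂ) ≠ 0 := by
      intro h; rw [h, zero_pow hn0.ne'] at hu; exact zero_ne_one hu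
    have ht : f (ε, ⟨u, hu⟩) i0 = c ε * u := by
      show E ε i0 * (c ε * u) = c ε * u
      simp [hE]
    have htne : c ε * u ≠ 0 := mul_ne_zero (hcne ε) hu0
    -- the scaling recovered equals c ε
    have hcxf : cx (f (ε, ⟨u, hu⟩)) = c ε := by
      have htn : (f (ε, ⟨u, hu⟩) i0) ^ n = c ε ^ n := by
        rw [ht, mul_pow, hu, mul_one]
      rcases hPcases ε with h | h
      · have hc1 : c ε = 1 := by simp only [hc]; exact if_pos h
        have e : cx (f (ε, ⟨u, hu⟩)) = 1 := by
          simp only [hcx]; exact if_pos (by rw [htn, hc1, one_pow])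
        rw [e, hc1]
      · have hne : (∏ i, E ε i) ≠ 1 := by rw [h]; norm_num
        have hcw : c ε = w := by simp only [hc]; exact if_neg hne
        have hfn : (f (ε, ⟨u, hu⟩) i0) ^ n = -1 := by rw [htn, hcw, hw]
        have e : cx (f (ε, ⟨u, hu⟩)) = w := by
          simp only [hcx]; exact if_neg (by rw [hfn]; norm_num)
        rw [e, hcw]
    refine Prod.ext ?_ (Subtype.ext ?_)
    · funext i
      show (if f (ε, ⟨u, hu⟩) i.1 = f (ε, ⟨u, hu⟩) i0 then true else false) = ε i
      have hxi : f (ε, ⟨u, hu⟩) i.1 = μ (ε i) * (c ε * u) := by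
        show E ε i.1 * (c ε * u) = μ (ε i) * (c ε * u)
        congr 1
        simp [hE, i.2]
      rw [hxi, ht]
      cases hb : ε i
      · have hne2 : -(c ε * u) ≠ c ε * u := by
          intro h
          exact htne (by linear_combination -h / 2)
        simp [hμ, hne2]
      · simp [hμ]
    · show (g (f (ε, ⟨u, hu⟩))).2 = u
      show f (ε, ⟨u, hu⟩) i0 / cx (f (ε, ⟨u, hu⟩)) = u
      rw [ht, hcxf, mul_div_cancel_left₀ _ (hcne ε)]
  have hbij : Function.Bijective F :=
    Function.bijective_iff_has_inverse.2 ⟨G, hGF, hFG⟩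
  -- now count
  have hcard : Nat.card (({i : Fin n // i ≠ i0} → Bool) × {u : ℂ // u ^ n = 1}) =
      Nat.card S := Nat.card_eq_of_bijective F hbij
  have hroots : Nat.card {u : ℂ // u ^ n = 1} = n := by
    have he : {u : ℂ // u ^ n = 1} ≃ (nthRootsFinset n (1 : ℂ) : Finset ℂ) :=
      Equiv.subtypeEquivRight fun u => (mem_nthRootsFinset hn0 1).symm
    rw [Nat.card_congr he, Nat.card_eq_finsetCard,
      (Complex.isPrimitiveRoot_exp n hn0.ne').card_nthRootsFinset]
  have hsigns : Nat.card ({i : Fin n // i ≠ i0} → Bool) = 2 ^ (n - 1) := by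
    rw [Nat.card_eq_fintype_card, Fintype.card_fun, Fintype.card_bool]
    congr 1
    rw [Fintype.card_subtype_compl, Fintype.card_subtype_eq, Fintype.card_fin]
  rw [← Nat.card_coe_set_eq, ← hcard, Nat.card_prod, hroots, hsigns, mul_comm]
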